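/- There exists a computable function f : ℕ → ℕ such that every fiber f⁻¹({x}) has cardinality 1 or 2, but the set Λ = {x : ∃ x₁ x₂, x₁ ≠ x₂ ∧ f(x₁) = x ∧ f(x₂) = x} of elements with two preimages is not computable. -/

import Mathlib

open Nat.Partrec Code

/-- `haltsB c s`: code `c` halts on input `0` within `s` steps. -/
def haltsB (c s : ℕ) : Bool := (Nat.Partrec.Code.evaln s (Denumerable.ofNat Nat.Partrec.Code c) 0).isSome

/-- `s` is the least halting stage. -/
def condB (t : ℕ) : Bool :=
  haltsB t.unpair.1 t.unpair.2 && (decide (t.unpair.2 = 0) || !haltsB t.unpair.1 (t.unpair.2 - 1))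

def myf (n : ℕ) : ℕ :=
  if n % 2 = 0 then n / 2
  else if condB (n / 2) then 2 * (n / 2).unpair.1 + 1 else n - 1

theorem haltsB_prim : Primrec₂ haltsB :=
  (Primrec.option_isSome.comp
    (Nat.Partrec.Code.primrec_evaln.comp
      ((Primrec.snd.pair ((Primrec.ofNat _).comp Primrec.fst)).pair (Primrec.const 0))))

theorem condB_prim : Primrec condB := by
  have h1 : Primrec fun t : ℕ => t.unpair.1 := Primrec.fst.comp Primrec.unpair
  have h2 : Primrec fun t : ℕ => t.unpair.2 := Primrec.snd.comp Primrec.unpair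
  exact Primrec.and.comp (haltsB_prim.comp h1 h2)
    (Primrec.or.comp (Primrec.eq.comp h2 (Primrec.const 0)).decide
      (Primrec.not.comp (haltsB_prim.comp h1 (Primrec.nat_sub.comp h2 (Primrec.const 1)))))

theorem myf_prim : Primrec myf := by
  have hd : Primrec fun n : ℕ => n / 2 := Primrec.nat_div.comp .id (Primrec.const 2)
  refine Primrec.ite (Primrec.eq.comp (Primrec.nat_mod.comp .id (Primrec.const 2)) (Primrec.const 0))
    hd (Primrec.ite ?_ ?_ (Primrec.nat_sub.comp .id (Primrec.const 1)))
  · exact PrimrecPred.comp (p := fun b : Bool => b = true) (Primrec.eq.comp .id (Primrec.const true))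
      (condB_prim.comp hd)
  · exact Primrec.succ.comp (Primrec.nat_mul.comp (Primrec.const 2)
      ((Primrec.fst.comp Primrec.unpair).comp hd))

theorem haltsB_mono {c : ℕ} {s s' : ℕ} (h : s ≤ s') (hs : haltsB c s = true) :
    haltsB c s' = true := by
  unfold haltsB at *
  rw [Option.isSome_iff_exists] at *
  obtain ⟨x, hx⟩ := hs
  exact ⟨x, Nat.Partrec.Code.evaln_mono h hx⟩

theorem myf_even (m : ℕ) : myf (2 * m) = m := by
  simp [myf, Nat.mul_div_cancel_left _ (by norm_num : 0 < 2), Nat.mul_mod_right]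

/-- uniqueness of odd preimages -/
theorem odd_preimage_unique {n₁ n₂ m : ℕ} (h₁ : n₁ % 2 = 1) (h₂ : n₂ % 2 = 1)
    (e₁ : myf n₁ = m) (e₂ : myf n₂ = m) : n₁ = n₂ := by
  have key : ∀ {a b : ℕ}, a % 2 = 1 → b % 2 = 1 → myf a = m → myf b = m →
      condB (a / 2) = true → condB (b / 2) = true → a = b := by
    intro a b ha hb ea eb ca cb
    rw [myf, if_neg (by omega), if_pos ca] at ea
    rw [myf, if_neg (by omega), if_pos cb] at eb
    have hc : (a / 2).unpair.1 = (b / 2).unpair.1 := by omega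
    -- now least stages are equal
    unfold condB at ca cb
    simp only [Bool.and_eq_true, Bool.or_eq_true, decide_eq_true_eq, Bool.not_eq_true'] at ca cb
    have hs : (a / 2).unpair.2 = (b / 2).unpair.2 := by
      by_contra hne
      rcases Nat.lt_or_ge (a / 2).unpair.2 (b / 2).unpair.2 with hlt | hge
      · rcases cb.2 with h0 | hless
        · omega
        · have := haltsB_mono (c := (b/2).unpair.1) (s := (a/2).unpair.2)
            (s' := (b/2).unpair.2 - 1) (by omega) (hc ▸ ca.1)
          rw [this] at hless; exact absurd hless (by simp)
      · have hlt : (b / 2).unpair.2 < (a / 2).unpair.2 := by omega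
        rcases ca.2 with h0 | hless
        · omega
        · have := haltsB_mono (c := (a/2).unpair.1) (s := (b/2).unpair.2)
            (s' := (a/2).unpair.2 - 1) (by omega) (hc ▸ cb.1)
          rw [this] at hless; exact absurd hless (by simp)
    have : a / 2 = b / 2 := by
      have := Nat.pair_unpair (a / 2)
      have := Nat.pair_unpair (b / 2)
      rw [← Nat.pair_unpair (a / 2), ← Nat.pair_unpair (b / 2), hc, hs]
    omega
  by_cases c₁ : condB (n₁ / 2) = true <;> by_cases c₂ : condB (n₂ / 2) = true
  · exact key h₁ h₂ e₁ e₂ c₁ c₂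
  · -- m odd from n₁, even from n₂ : contradiction
    rw [myf, if_neg (by omega), if_pos c₁] at e₁
    rw [myf, if_neg (by omega), if_neg c₂] at e₂
    omega
  · rw [myf, if_neg (by omega), if_neg c₁] at e₁
    rw [myf, if_neg (by omega), if_pos c₂] at e₂
    omega
  · rw [myf, if_neg (by omega), if_neg c₁] at e₁
    rw [myf, if_neg (by omega), if_neg c₂] at e₂
    omega

theorem stmt_10 :
    ∃ f : ℕ → ℕ, Computable f ∧
      (∀ x : ℕ, (f ⁻¹' {x}).ncard = 1 ∨ (f ⁻¹' {x}).ncard = 2) ∧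
      ¬ ComputablePred fun x : ℕ => ∃ x₁ x₂ : ℕ, x₁ ≠ x₂ ∧ f x₁ = x ∧ f x₂ = x := by
  refine ⟨myf, myf_prim.to_comp, ?_, ?_⟩
  · intro m
    by_cases h : ∃ n, n % 2 = 1 ∧ myf n = m
    · obtain ⟨n, hn, hfn⟩ := h
      right
      have hset : myf ⁻¹' {m} = {2 * m, n} := by
        ext y
        simp only [Set.mem_preimage, Set.mem_singleton_iff, Set.mem_insert_iff]
        constructor
        · intro hy
          rcases Nat.even_or_odd y with he | ho
          · left
            obtain ⟨k, hk⟩ := he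
            rw [myf, if_pos (by omega)] at hy
            omega
          · right
            exact odd_preimage_unique (Nat.odd_iff.mp ho) hn hy hfn
        · rintro (rfl | rfl)
          · exact myf_even m
          · exact hfn
      rw [hset, Set.ncard_pair (by omega)]
    · left
      have hset : myf ⁻¹' {m} = {2 * m} := by
        ext y
        simp only [Set.mem_preimage, Set.mem_singleton_iff]
        constructor
        · intro hy
          rcases Nat.even_or_odd y with he | ho
          · obtain ⟨k, hk⟩ := he
            rw [myf, if_pos (by omega)] at hy
            omega
          · exact absurd ⟨y, Nat.odd_iff.mp ho, hy⟩ h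
        · rintro rfl; exact myf_even m
      rw [hset, Set.ncard_singleton]
  · rintro ⟨inst, hcomp⟩
    apply ComputablePred.halting_problem 0
    have hq : ComputablePred fun c : Nat.Partrec.Code =>
        ∃ x₁ x₂ : ℕ, x₁ ≠ x₂ ∧ myf x₁ = 2 * Encodable.encode c + 1 ∧
          myf x₂ = 2 * Encodable.encode c + 1 := by
      refine ⟨fun c => inst _, ?_⟩
      exact hcomp.comp ((Primrec.succ.comp (Primrec.nat_mul.comp (Primrec.const 2) Primrec.encode)).to_comp)
    refine hq.of_eq fun c => ?_
    constructor
    · rintro ⟨x₁, x₂, hne, h₁, h₂⟩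
      -- one of them is odd
      have hodd : ∃ x, x % 2 = 1 ∧ myf x = 2 * Encodable.encode c + 1 := by
        rcases Nat.even_or_odd x₁ with he₁ | ho₁
        · rcases Nat.even_or_odd x₂ with he₂ | ho₂
          · exfalso
            obtain ⟨k₁, hk₁⟩ := he₁; obtain ⟨k₂, hk₂⟩ := he₂
            rw [myf, if_pos (by omega)] at h₁
            rw [myf, if_pos (by omega)] at h₂
            exact hne (by omega)
          · exact ⟨x₂, Nat.odd_iff.mp ho₂, h₂⟩
        · exact ⟨x₁, Nat.odd_iff.mp ho₁, h₁⟩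
      obtain ⟨x, hx, hfx⟩ := hodd
      by_cases hc : condB (x / 2) = true
      · rw [myf, if_neg (by omega), if_pos hc] at hfx
        have he : (x / 2).unpair.1 = Encodable.encode c := by omega
        unfold condB at hc
        simp only [Bool.and_eq_true] at hc
        have := hc.1
        rw [he] at this
        unfold haltsB at this
        rw [Option.isSome_iff_exists] at this
        obtain ⟨v, hv⟩ := this
        rw [Denumerable.ofNat_encode] at hv
        exact Part.dom_iff_mem.mpr ⟨v, Nat.Partrec.Code.evaln_sound hv⟩
      · rw [myf, if_neg (by omega), if_neg hc] at hfx
        omega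
    · intro hdom
      obtain ⟨v, hv⟩ := Part.dom_iff_mem.mp hdom
      have hex : ∃ s, haltsB (Encodable.encode c) s = true := by
        rw [Nat.Partrec.Code.evaln_complete] at hv
        obtain ⟨k, hk⟩ := hv
        refine ⟨k, ?_⟩
        unfold haltsB
        rw [Denumerable.ofNat_encode, Option.isSome_iff_exists]
        exact ⟨v, hk⟩
      set s := Nat.find hex with hs
      have hcond : condB (Nat.pair (Encodable.encode c) s) = true := by
        unfold condB
        rw [Nat.unpair_pair]
        simp only [Bool.and_eq_true, Bool.or_eq_true, decide_eq_true_eq, Bool.not_eq_true']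
        refine ⟨Nat.find_spec hex, ?_⟩
        by_cases h0 : s = 0
        · exact Or.inl h0
        · right
          have := Nat.find_min hex (m := s - 1) (by omega)
          simpa using this
      refine ⟨2 * Nat.pair (Encodable.encode c) s + 1, 2 * (2 * Encodable.encode c + 1),
        by omega, ?_, ?_⟩
      · rw [myf, if_neg (by omega), if_pos (by
          have : (2 * Nat.pair (Encodable.encode c) s + 1) / 2 = Nat.pair (Encodable.encode c) s := by omega
          rw [this]; exact hcond)]
        have : (2 * Nat.pair (Encodable.encode c) s + 1) / 2 = Nat.pair (Encodable.encode c) s := by omega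
        rw [this, Nat.unpair_pair]
      · exact myf_even _
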